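/- If T : X →L[𝕜] Y is a Fredholm operator and S : Z →L[𝕜] Y is any continuous linear map between Banach spaces such that S is surjective onto Y modulo the range of T (i.e. range T + range S = Y), then the pullback space P = {(z,x) : S z = T x} with projection to Z is such that the induced map P → Z has Fredholm 'linearized' structure: the kernel of the projection P → Z is isomorphic to ker T and its cokernel embeds in coker T; in particular, if range T + range S = Y then the projection P → Z is Fredholm with index equal to index(T). -/

import Mathlib

variable {𝕜 : Type*} [NontriviallyNormedField 𝕜]

/-- A continuous linear map is Fredholm if its kernel is finite dimensional and its
range is closed with finite dimensional cokernel. -/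
def IsFredholm {X Y : Type*} [NormedAddCommGroup X] [NormedSpace 𝕜 X]
    [NormedAddCommGroup Y] [NormedSpace 𝕜 Y] (T : X →L[𝕜] Y) : Prop :=
  FiniteDimensional 𝕜 (LinearMap.ker (T : X →ₗ[𝕜] Y)) ∧ IsClosed (LinearMap.range (T : X →ₗ[𝕜] Y) : Set Y) ∧
    FiniteDimensional 𝕜 (Y ⧸ LinearMap.range (T : X →ₗ[𝕜] Y))

/-- The Fredholm index: `dim ker T - dim coker T`. -/
noncomputable def fredholmIndex {X Y : Type*} [NormedAddCommGroup X] [NormedSpace 𝕜 X]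
    [NormedAddCommGroup Y] [NormedSpace 𝕜 Y] (T : X →L[𝕜] Y) : ℤ :=
  (Module.finrank 𝕜 (LinearMap.ker (T : X →ₗ[𝕜] Y)) : ℤ) - Module.finrank 𝕜 (Y ⧸ LinearMap.range (T : X →ₗ[𝕜] Y))

/-- Linear pullback of a Fredholm operator along a transverse map: if
`range T + range S = Y`, then on the pullback `P = {(z,x) | S z = T x}` the
projection `π : P → Z` has kernel isomorphic to `ker T`, cokernel embedding into
`coker T`, and `π` is Fredholm with `index π = index T`. -/
theorem isFredholm_pullback {X Y Z : Type*}
    [NormedAddCommGroup X] [NormedSpace 𝕜 X] [CompleteSpace X]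
    [NormedAddCommGroup Y] [NormedSpace 𝕜 Y] [CompleteSpace Y]
    [NormedAddCommGroup Z] [NormedSpace 𝕜 Z] [CompleteSpace Z]
    (T : X →L[𝕜] Y) (S : Z →L[𝕜] Y) (hT : IsFredholm T)
    (htrans : LinearMap.range (T : X →ₗ[𝕜] Y) ⊔ LinearMap.range (S : Z →ₗ[𝕜] Y) = ⊤)
    (P : Submodule 𝕜 (Z × X))
    (hP : P = LinearMap.ker (((S.comp (ContinuousLinearMap.fst 𝕜 Z X)) -
      (T.comp (ContinuousLinearMap.snd 𝕜 Z X)) : Z × X →ₗ[𝕜] Y)))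
    (π : P →L[𝕜] Z) (hπ : π = (ContinuousLinearMap.fst 𝕜 Z X).comp P.subtypeL) :
    Nonempty ((LinearMap.ker (π : P →ₗ[𝕜] Z)) ≃ₗ[𝕜] (LinearMap.ker (T : X →ₗ[𝕜] Y))) ∧
    (∃ ι : (Z ⧸ LinearMap.range (π : P →ₗ[𝕜] Z)) →ₗ[𝕜] (Y ⧸ LinearMap.range (T : X →ₗ[𝕜] Y)), Function.Injective ι) ∧
    IsFredholm π ∧ fredholmIndex π = fredholmIndex T := by
  have hmemP : ∀ p : Z × X, p ∈ P ↔ S p.1 = T p.2 := by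
    intro p; rw [hP]; simp [LinearMap.mem_ker, sub_eq_zero]
  have hπ' : ∀ q : P, π q = (q : Z × X).1 := by
    intro q; rw [hπ]; rfl
  -- kernel equivalence
  have eker : (LinearMap.ker (π : P →ₗ[𝕜] Z)) ≃ₗ[𝕜] (LinearMap.ker (T : X →ₗ[𝕜] Y)) :=
    { toFun := fun q => ⟨((q : P) : Z × X).2, by
        have h0 : ((q : P) : Z × X).1 = 0 := by
          have := q.2
          rw [LinearMap.mem_ker, ContinuousLinearMap.coe_coe, hπ' _] at this
          exact this
        have := (hmemP ((q : P) : Z × X)).1 (q : P).2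
        rw [h0, map_zero] at this
        exact this.symm⟩
      map_add' := fun a b => rfl
      map_smul' := fun c a => rfl
      invFun := fun k => ⟨⟨((0 : Z), (k : X)), by
          rw [hmemP]; simp [k.2]⟩, by
        rw [LinearMap.mem_ker, ContinuousLinearMap.coe_coe, hπ' _]⟩
      left_inv := by
        rintro ⟨⟨⟨z, x⟩, hzx⟩, hq⟩
        have h0 : z = 0 := by rw [LinearMap.mem_ker, ContinuousLinearMap.coe_coe, hπ' _] at hq; exact hq
        subst h0; rfl
      right_inv := fun k => rfl }
  -- range π = S⁻¹ (range T)
  have hrange : LinearMap.range (π : P →ₗ[𝕜] Z) = (LinearMap.range (T : X →ₗ[𝕜] Y)).comap (S : Z →ₗ[𝕜] Y) := by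
    ext z
    constructor
    · rintro ⟨q, rfl⟩
      rw [Submodule.mem_comap, ContinuousLinearMap.coe_coe, ContinuousLinearMap.coe_coe, hπ' q]
      exact ⟨(q : Z × X).2, ((hmemP q).1 q.2).symm⟩
    · rintro ⟨x, hx⟩
      exact ⟨⟨(z, x), (hmemP (z, x)).2 hx.symm⟩, hπ' _⟩
  -- the map f : Z → Y/range T
  set f : Z →ₗ[𝕜] Y ⧸ LinearMap.range (T : X →ₗ[𝕜] Y) :=
    (LinearMap.range (T : X →ₗ[𝕜] Y)).mkQ ∘ₗ (S : Z →ₗ[𝕜] Y) with hf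
  have hkerf : LinearMap.ker f = LinearMap.range (π : P →ₗ[𝕜] Z) := by
    rw [hrange, hf, LinearMap.ker_comp, Submodule.ker_mkQ]
  let ι : (Z ⧸ LinearMap.range (π : P →ₗ[𝕜] Z)) →ₗ[𝕜] (Y ⧸ LinearMap.range (T : X →ₗ[𝕜] Y)) :=
    Submodule.liftQ _ f hkerf.ge
  have hιinj : Function.Injective ι := by
    rw [← LinearMap.ker_eq_bot]
    exact Submodule.ker_liftQ_eq_bot _ _ _ hkerf.le
  have hιsurj : Function.Surjective ι := by
    rw [← LinearMap.range_eq_top, Submodule.range_liftQ, hf, LinearMap.range_comp]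
    rw [Submodule.map_mkQ_eq_top]
    rw [show LinearMap.range (S : Z →ₗ[𝕜] Y) = LinearMap.range (S : Z →ₗ[𝕜] Y) from rfl]
    exact htrans
  have ecoker : (Z ⧸ LinearMap.range (π : P →ₗ[𝕜] Z)) ≃ₗ[𝕜] (Y ⧸ LinearMap.range (T : X →ₗ[𝕜] Y)) :=
    LinearEquiv.ofBijective ι ⟨hιinj, hιsurj⟩
  obtain ⟨hk, hc, hq⟩ := hT
  refine ⟨⟨eker⟩, ⟨ι, hιinj⟩, ⟨?_, ?_, ?_⟩, ?_⟩
  · exact Module.Finite.equiv eker.symm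
  · have : (LinearMap.range (π : P →ₗ[𝕜] Z) : Set Z) = (S : Z → Y) ⁻¹' (LinearMap.range (T : X →ₗ[𝕜] Y) : Set Y) := by
      rw [hrange]; rfl
    rw [this]
    exact hc.preimage S.continuous
  · exact Module.Finite.equiv ecoker.symm
  · unfold fredholmIndex
    rw [eker.finrank_eq, ecoker.finrank_eq]
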